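/- Let k ≥ 1, ℓ ≥ 1, r with 1 ≤ r ≤ ℓ, t ≥ 1, and m = kℓ + r. For any copy P of the ℓ-blow-up of the k-path on (k+1)t vertices, with vertices listed in the blow-up order v_1,…,v_{ℓ(k+1)t}, there exists a copy B of the disjoint union of k+1 copies of the braid graph B(ℓ, r, t) on the same vertex set, edge-disjoint from P, such that the union P ∪ B contains the m-th power of the path on the sequence (v_1,…,v_{ℓ(k+1)t}); i.e., in P ∪ B, v_i is adjacent to v_j whenever 0 < |i − j| ≤ m. -/

import Mathlib

/-- The `ℓ`-blow-up of the `k`-path, on `N` vertices listed in blow-up order: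
vertex `i` lies in block `i / ℓ`, blocks are independent sets of size `ℓ`, and two
vertices are adjacent iff their blocks are distinct and at distance at most `k`. -/
def pathBlowup (k ℓ N : ℕ) : SimpleGraph (Fin N) where
  Adj i j := (i : ℕ) / ℓ ≠ (j : ℕ) / ℓ ∧
    ((((i : ℕ) / ℓ : ℕ) : ℤ) - (((j : ℕ) / ℓ : ℕ) : ℤ)).natAbs ≤ k
  symm := by
    constructor
    intro i j h
    exact ⟨Ne.symm h.1, by have := h.2; omega⟩
  loopless := by
    constructor
    intro i h
    exact h.1 rfl

/-- The braid graph `B(ℓ, r, t)` (see paper, Definition of the braid graph). -/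
def braid (ℓ r t : ℕ) : SimpleGraph (Fin t × Fin ℓ) where
  Adj x y :=
    (x.1 = y.1 ∧ x.2 ≠ y.2) ∨
    ((x.1 : ℕ) + 1 = (y.1 : ℕ) ∧ (y.2 : ℕ) + ℓ ≤ (x.2 : ℕ) + r) ∨
    ((y.1 : ℕ) + 1 = (x.1 : ℕ) ∧ (x.2 : ℕ) + ℓ ≤ (y.2 : ℕ) + r)
  symm := by
    constructor
    intro x y h
    rcases h with ⟨h1, h2⟩ | ⟨h1, h2⟩ | ⟨h1, h2⟩
    · exact Or.inl ⟨h1.symm, h2.symm⟩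
    · exact Or.inr (Or.inr ⟨h1, h2⟩)
    · exact Or.inr (Or.inl ⟨h1, h2⟩)
  loopless := by
    constructor
    intro x h
    rcases h with ⟨_, h⟩ | ⟨h, _⟩ | ⟨h, _⟩
    · exact h rfl
    · omega
    · omega

/-- The disjoint union of `k+1` copies of the braid graph `B(ℓ, r, t)`. -/
def braidCopies (k ℓ r t : ℕ) : SimpleGraph (Fin (k + 1) × (Fin t × Fin ℓ)) where
  Adj x y := x.1 = y.1 ∧ (braid ℓ r t).Adj x.2 y.2
  symm := ⟨fun x y h => ⟨h.1.symm, (braid ℓ r t).symm.symm _ _ h.2⟩⟩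
  loopless := ⟨fun x h => (braid ℓ r t).loopless.irrefl _ h.2⟩

private lemma mulAux (a b p q : ℕ) (ha : a < b) (hp : p < q) : a * q + p < b * q := by
  calc a * q + p < (a + 1) * q := by nlinarith
  _ ≤ b * q := Nat.mul_le_mul_right _ ha

/-- The bijection between linear indices and (copy, clique, position) triples. -/
def braidEquiv (k ℓ t : ℕ) (hl : 0 < ℓ) :
    Fin (ℓ * ((k + 1) * t)) ≃ Fin (k + 1) × (Fin t × Fin ℓ) where
  toFun n := (⟨((n : ℕ) / ℓ) % (k + 1), Nat.mod_lt _ (Nat.succ_pos k)⟩,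
    ⟨((n : ℕ) / ℓ) / (k + 1), by
      have h1 : (n : ℕ) / ℓ < (k + 1) * t := by
        rw [Nat.div_lt_iff_lt_mul hl]
        calc (n : ℕ) < ℓ * ((k + 1) * t) := n.isLt
        _ = (k + 1) * t * ℓ := by ring
      rw [Nat.div_lt_iff_lt_mul (Nat.succ_pos k)]
      calc (n : ℕ) / ℓ < (k + 1) * t := h1
      _ = t * (k + 1) := by ring⟩,
    ⟨(n : ℕ) % ℓ, Nat.mod_lt _ hl⟩)
  invFun x := ⟨((x.2.1 : ℕ) * (k + 1) + (x.1 : ℕ)) * ℓ + (x.2.2 : ℕ), by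
    have h1 : (x.2.1 : ℕ) * (k + 1) + (x.1 : ℕ) < t * (k + 1) :=
      mulAux _ _ _ _ x.2.1.isLt x.1.isLt
    have h2 : ((x.2.1 : ℕ) * (k + 1) + (x.1 : ℕ)) * ℓ + (x.2.2 : ℕ) < (t * (k + 1)) * ℓ :=
      mulAux _ _ _ _ h1 x.2.2.isLt
    calc _ < (t * (k + 1)) * ℓ := h2
    _ = ℓ * ((k + 1) * t) := by ring⟩
  left_inv n := by
    apply Fin.ext
    show (((n : ℕ) / ℓ / (k + 1)) * (k + 1) + ((n : ℕ) / ℓ) % (k + 1)) * ℓ + (n : ℕ) % ℓ = n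
    rw [Nat.div_add_mod', Nat.div_add_mod']
  right_inv x := by
    obtain ⟨⟨c, hc⟩, ⟨s, hs⟩, ⟨p, hp⟩⟩ := x
    have key : (s * (k + 1) + c) * ℓ + p = p + (s * (k + 1) + c) * ℓ := by ring
    have hdiv : ((s * (k + 1) + c) * ℓ + p) / ℓ = s * (k + 1) + c := by
      rw [key, Nat.add_mul_div_right _ _ hl, Nat.div_eq_of_lt hp, Nat.zero_add]
    have hmod : ((s * (k + 1) + c) * ℓ + p) % ℓ = p := by
      rw [key, Nat.add_mul_mod_self_right, Nat.mod_eq_of_lt hp]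
    have key2 : s * (k + 1) + c = c + s * (k + 1) := by ring
    simp only [Prod.mk.injEq, Fin.mk.injEq]
    refine ⟨?_, ?_, ?_⟩
    · show ((s * (k + 1) + c) * ℓ + p) / ℓ % (k + 1) = c
      rw [hdiv, key2, Nat.add_mul_mod_self_right, Nat.mod_eq_of_lt hc]
    · show ((s * (k + 1) + c) * ℓ + p) / ℓ / (k + 1) = s
      rw [hdiv, key2, Nat.add_mul_div_right _ _ (Nat.succ_pos k), Nat.div_eq_of_lt hc,
        Nat.zero_add]
    · show ((s * (k + 1) + c) * ℓ + p) % ℓ = p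
      exact hmod

/-- For any copy `P` of the `ℓ`-blow-up of the `k`-path on `(k+1)t` vertices, there is
a copy `B` of `(k+1)·B(ℓ,r,t)` on the same vertex set, edge-disjoint from `P`, such
that in `P ∪ B` any two vertices at distance at most `m = kℓ + r` in the blow-up
order are adjacent (i.e. `P ∪ B` contains the `m`-th power of the path). -/
theorem stmt10 (k ℓ r t : ℕ) (hk : 1 ≤ k) (hl : 1 ≤ ℓ) (hr1 : 1 ≤ r) (hr2 : r ≤ ℓ)
    (ht : 1 ≤ t) :
    ∃ B : SimpleGraph (Fin (ℓ * ((k + 1) * t))),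
      (∀ i j, ¬((pathBlowup k ℓ (ℓ * ((k + 1) * t))).Adj i j ∧ B.Adj i j)) ∧
      Nonempty (B ≃g braidCopies k ℓ r t) ∧
      (∀ i j : Fin (ℓ * ((k + 1) * t)), (i : ℕ) < (j : ℕ) →
        (j : ℕ) ≤ (i : ℕ) + (k * ℓ + r) →
        (pathBlowup k ℓ (ℓ * ((k + 1) * t))).Adj i j ∨ B.Adj i j) := by
  set e := braidEquiv k ℓ t hl with he
  refine ⟨(braidCopies k ℓ r t).comap e, ?_, ⟨SimpleGraph.Iso.comap e _⟩, ?_⟩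
  · -- edge-disjointness
    rintro i j ⟨⟨hne, hdist⟩, hB⟩
    have hB' : (braidCopies k ℓ r t).Adj (e i) (e j) := hB
    rw [braidCopies] at hB'
    obtain ⟨hcopy, hbr⟩ := hB'
    have hcopy' : ((i : ℕ) / ℓ) % (k + 1) = ((j : ℕ) / ℓ) % (k + 1) :=
      congrArg Fin.val hcopy
    have hi := Nat.div_add_mod' ((i : ℕ) / ℓ) (k + 1)
    have hj := Nat.div_add_mod' ((j : ℕ) / ℓ) (k + 1)
    rw [braid] at hbr
    rcases hbr with ⟨h1, _⟩ | ⟨h1, _⟩ | ⟨h1, _⟩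
    · have h1' : ((i : ℕ) / ℓ) / (k + 1) = ((j : ℕ) / ℓ) / (k + 1) :=
        congrArg Fin.val h1
      exact hne (by rw [← hi, ← hj, h1', hcopy'])
    · have h1' : ((i : ℕ) / ℓ) / (k + 1) + 1 = ((j : ℕ) / ℓ) / (k + 1) := h1
      have : (j : ℕ) / ℓ = (i : ℕ) / ℓ + (k + 1) := by
        rw [← hi, ← hj, ← h1', hcopy']; ring
      omega
    · have h1' : ((j : ℕ) / ℓ) / (k + 1) + 1 = ((i : ℕ) / ℓ) / (k + 1) := h1
      have : (i : ℕ) / ℓ = (j : ℕ) / ℓ + (k + 1) := by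
        rw [← hi, ← hj, ← h1', hcopy']; ring
      omega
  · -- power containment
    intro i j hij hle
    have hbmono : (i : ℕ) / ℓ ≤ (j : ℕ) / ℓ := Nat.div_le_div_right hij.le
    have hub : (j : ℕ) / ℓ ≤ (i : ℕ) / ℓ + (k + 1) := by
      have h1 : (j : ℕ) ≤ (i : ℕ) + (k + 1) * ℓ := by
        have : k * ℓ + r ≤ (k + 1) * ℓ := by nlinarith
        omega
      calc (j : ℕ) / ℓ ≤ ((i : ℕ) + (k + 1) * ℓ) / ℓ := Nat.div_le_div_right h1
      _ = (i : ℕ) / ℓ + (k + 1) := Nat.add_mul_div_right _ _ hl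
    have hi := Nat.div_add_mod (i : ℕ) ℓ
    have hj := Nat.div_add_mod (j : ℕ) ℓ
    by_cases hbe : (i : ℕ) / ℓ = (j : ℕ) / ℓ
    · -- same block: clique edge of B
      right
      show (braidCopies k ℓ r t).Adj (e i) (e j)
      rw [braidCopies]
      refine ⟨by apply Fin.ext; show _ % (k+1) = _ % (k+1); rw [hbe], ?_⟩
      rw [braid]
      refine Or.inl ⟨by apply Fin.ext; show _ / (k+1) = _ / (k+1); rw [hbe], ?_⟩
      intro hpe
      have hpe' : (i : ℕ) % ℓ = (j : ℕ) % ℓ := congrArg Fin.val hpe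
      rw [hbe, hpe'] at hi
      exact absurd (hi.symm.trans hj) (by omega)
    · by_cases hbk : (j : ℕ) / ℓ ≤ (i : ℕ) / ℓ + k
      · -- blocks within distance k: P edge
        left
        exact ⟨hbe, by omega⟩
      · -- blocks at distance exactly k+1: bridge edge of B
        have hbj : (j : ℕ) / ℓ = (i : ℕ) / ℓ + (k + 1) := by omega
        right
        show (braidCopies k ℓ r t).Adj (e i) (e j)
        rw [braidCopies]
        refine ⟨by apply Fin.ext
                   show ((i:ℕ)/ℓ) % (k+1) = ((j:ℕ)/ℓ) % (k+1)
                   rw [hbj, Nat.add_mod_right], ?_⟩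
        rw [braid]
        refine Or.inr (Or.inl ⟨?_, ?_⟩)
        · show ((i:ℕ)/ℓ) / (k+1) + 1 = ((j:ℕ)/ℓ) / (k+1)
          rw [hbj, Nat.add_div_right _ (Nat.succ_pos k)]
        · show (j : ℕ) % ℓ + ℓ ≤ (i : ℕ) % ℓ + r
          have e1 : ℓ * ((j : ℕ) / ℓ) = ℓ * ((i : ℕ) / ℓ) + k * ℓ + ℓ := by
            rw [hbj]; ring
          linarith [hi, hj, hle]
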